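/- The function E(α, β) = Λ(α) + Λ(β) + Λ(π − α − β), defined on the open triangle domain D = {(α, β) : α > 0, β > 0, α + β < π}, has Hessian matrix H(E)(α,β) = [[−sin β/(sin(α+β) sin α), cos(α+β)/sin(α+β)], [cos(α+β)/sin(α+β), −sin α/(sin(α+β) sin β)]], and this Hessian is negative definite at every point of D. -/

import Mathlib

open Real MeasureTheory intervalIntegral Matrix

/-- The Lobachevsky function. -/
noncomputable def lob (x : ℝ) : ℝ := -∫ t in (0:ℝ)..x, Real.log |2 * Real.sin t|

/-- The hyperbolic volume energy of a Euclidean triangle with angles a, b, π - a - b. -/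
noncomputable def Etri (a b : ℝ) : ℝ := lob a + lob b + lob (Real.pi - a - b)

lemma integrableOn_neg_log : IntegrableOn (fun t : ℝ => -Real.log t) (Set.Ioc 0 1) := by
  have hcont : ContinuousOn (fun t : ℝ => t - t * Real.log t) (Set.Icc 0 1) :=
    (continuous_id.sub Real.continuous_mul_log).continuousOn
  have hderiv : ∀ x ∈ Set.Ioo (0:ℝ) 1,
      HasDerivAt (fun t : ℝ => t - t * Real.log t) (-Real.log x) x := by
    intro x hx
    have h := (hasDerivAt_id x).sub (Real.hasDerivAt_mul_log (ne_of_gt hx.1))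
    exact h.congr_deriv (by ring)
  have hpos : ∀ x ∈ Set.Ioo (0:ℝ) 1, 0 ≤ -Real.log x := by
    intro x hx
    simpa using Real.log_nonpos hx.1.le hx.2.le
  exact intervalIntegral.integrableOn_deriv_of_nonneg hcont hderiv hpos

lemma intervalIntegrable_f {x : ℝ} (hx0 : 0 < x) (hxπ : x < Real.pi) :
    IntervalIntegrable (fun t => Real.log |2 * Real.sin t|) volume 0 x := by
  set c := min x 1 with hc
  have hc0 : 0 < c := lt_min hx0 one_pos
  have hc1 : c ≤ 1 := min_le_right _ _
  have hcx : c ≤ x := min_le_left _ _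
  have hmeas : Measurable fun t => Real.log |2 * Real.sin t| :=
    Real.measurable_log.comp ((Real.measurable_sin.const_mul 2).abs)
  -- integrable on (0, c]
  have h1 : IntegrableOn (fun t => Real.log |2 * Real.sin t|) (Set.Ioc 0 c) := by
    have hg : IntegrableOn (fun t : ℝ => 2 - Real.log t) (Set.Ioc 0 c) := by
      have : IntegrableOn (fun t : ℝ => -Real.log t) (Set.Ioc 0 c) :=
        integrableOn_neg_log.mono_set (Set.Ioc_subset_Ioc_right hc1)
      have hconst : IntegrableOn (fun _ : ℝ => (2:ℝ)) (Set.Ioc 0 c) :=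
        integrableOn_const measure_Ioc_lt_top.ne
      have heq : (fun t : ℝ => 2 - Real.log t) = fun t => 2 + -Real.log t := by
        funext t; ring
      rw [heq]; exact hconst.add this
    refine Integrable.mono hg (hmeas.aestronglyMeasurable.restrict) ?_
    rw [ae_restrict_iff' measurableSet_Ioc]
    refine Filter.Eventually.of_forall ?_
    intro t ht
    have ht0 := ht.1
    have ht1 : t ≤ 1 := le_trans ht.2 hc1
    have hsinpos : 0 < Real.sin t :=
      Real.sin_pos_of_pos_of_lt_pi ht0 (lt_of_le_of_lt ht1 (by linarith [Real.pi_gt_three]))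
    have hsublow : (3/4 : ℝ) * t ≤ Real.sin t := by
      nlinarith [Real.sin_gt_sub_cube ht0, sq_nonneg t, pow_le_one₀ (n := 3) ht0.le ht1]
    have hsinlt : Real.sin t ≤ t := (Real.sin_lt ht0).le
    have habs : |2 * Real.sin t| = 2 * Real.sin t := abs_of_pos (by linarith)
    rw [Real.norm_eq_abs, Real.norm_eq_abs, habs]
    have hlow : Real.log (3/4) + Real.log t ≤ Real.log (2 * Real.sin t) := by
      rw [← Real.log_mul (by norm_num) (ne_of_gt ht0)]
      exact Real.log_le_log (by positivity) (by linarith)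
    have hhigh : Real.log (2 * Real.sin t) ≤ Real.log 2 + Real.log t := by
      rw [← Real.log_mul (by norm_num) (ne_of_gt ht0)]
      exact Real.log_le_log (by positivity) (by linarith)
    have hlog2 : Real.log 2 < 1 := by
      have := Real.log_lt_sub_one_of_pos (x := 2) (by norm_num) (by norm_num)
      linarith
    have hlog34 : -1 < Real.log (3/4 : ℝ) := by
      have h := Real.log_le_log (x := (1/2 : ℝ)) (by norm_num) (by norm_num : (1/2:ℝ) ≤ 3/4)
      have : Real.log (1/2 : ℝ) = -Real.log 2 := by
        rw [Real.log_div one_ne_zero (by norm_num), Real.log_one]; ring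
      linarith
    have hlogt : Real.log t ≤ 0 := Real.log_nonpos ht0.le ht1
    rw [abs_of_nonneg (by linarith : (0:ℝ) ≤ 2 - Real.log t)]
    rcases abs_cases (Real.log (2 * Real.sin t)) with ⟨h, _⟩ | ⟨h, _⟩ <;> linarith
  -- interval integrable on [0, c] and [c, x]
  have h2 : IntervalIntegrable (fun t => Real.log |2 * Real.sin t|) volume 0 c := by
    rw [intervalIntegrable_iff_integrableOn_Ioc_of_le hc0.le]
    exact h1
  have h3 : IntervalIntegrable (fun t => Real.log |2 * Real.sin t|) volume c x := by
    apply ContinuousOn.intervalIntegrable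
    intro t ht
    rw [Set.uIcc_of_le hcx] at ht
    have hsin : 0 < Real.sin t :=
      Real.sin_pos_of_pos_of_lt_pi (lt_of_lt_of_le hc0 ht.1) (lt_of_le_of_lt ht.2 hxπ)
    have habs : (0:ℝ) < |2 * Real.sin t| := by
      rw [abs_of_pos (by linarith : (0:ℝ) < 2 * Real.sin t)]; linarith
    have : ContinuousAt (fun t => Real.log |2 * Real.sin t|) t :=
      ((continuous_const.mul Real.continuous_sin).abs.continuousAt).log (ne_of_gt habs)
    exact this.continuousWithinAt
  exact h2.trans h3

lemma lob_hasDerivAt {y : ℝ} (hy0 : 0 < y) (hyπ : y < Real.pi) :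
    HasDerivAt lob (-Real.log (2 * Real.sin y)) y := by
  have hsin : 0 < Real.sin y := Real.sin_pos_of_pos_of_lt_pi hy0 hyπ
  have habs : (0:ℝ) < |2 * Real.sin y| := by
    rw [abs_of_pos (by linarith : (0:ℝ) < 2 * Real.sin y)]; linarith
  have hcont : ContinuousAt (fun t => Real.log |2 * Real.sin t|) y :=
    ((continuous_const.mul Real.continuous_sin).abs.continuousAt).log (ne_of_gt habs)
  have h := intervalIntegral.integral_hasDerivAt_right (intervalIntegrable_f hy0 hyπ)
    ((Real.measurable_log.comp ((Real.measurable_sin.const_mul 2).abs)).stronglyMeasurable.stronglyMeasurableAtFilter)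
    hcont
  have h2 := h.neg
  rw [abs_of_pos (by linarith : (0:ℝ) < 2 * Real.sin y)] at h2
  exact h2

lemma Etri_partial1 {b : ℝ} (hb0 : 0 < b) {a : ℝ} (ha : a ∈ Set.Ioo 0 (Real.pi - b)) :
    HasDerivAt (fun a' => Etri a' b)
      (-Real.log (2 * Real.sin a) + Real.log (2 * Real.sin (Real.pi - a - b))) a := by
  have h1 := lob_hasDerivAt ha.1 (lt_trans ha.2 (by linarith))
  have hin : HasDerivAt (fun a' : ℝ => Real.pi - a' - b) (-1) a := by
    simpa using ((hasDerivAt_id a).const_sub Real.pi).sub_const b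
  have hpt0 : 0 < Real.pi - a - b := by have := ha.2; linarith
  have hptπ : Real.pi - a - b < Real.pi := by have := ha.1; linarith
  have h3 := (lob_hasDerivAt hpt0 hptπ).comp a hin
  have H := (h1.add_const (lob b)).add h3
  exact (show HasDerivAt (fun a' => Etri a' b) _ a from H).congr_deriv (by ring)

lemma Etri_partial2 {a : ℝ} (ha0 : 0 < a) {b : ℝ} (hb : b ∈ Set.Ioo 0 (Real.pi - a)) :
    HasDerivAt (fun b' => Etri a b')
      (-Real.log (2 * Real.sin b) + Real.log (2 * Real.sin (Real.pi - a - b))) b := by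
  have h1 := lob_hasDerivAt hb.1 (lt_trans hb.2 (by linarith))
  have hin : HasDerivAt (fun b' : ℝ => Real.pi - a - b') (-1) b := by
    simpa using (hasDerivAt_id b).const_sub (Real.pi - a)
  have hpt0 : 0 < Real.pi - a - b := by have := hb.2; linarith
  have hptπ : Real.pi - a - b < Real.pi := by have := hb.1; linarith
  have h3 := (lob_hasDerivAt hpt0 hptπ).comp b hin
  have H := ((h1.const_add (lob a)).add h3)
  exact (show HasDerivAt (fun b' => Etri a b') _ b from H).congr_deriv (by ring)

set_option maxHeartbeats 1000000 in
theorem Etri_hessian (α β : ℝ) (hα : 0 < α) (hβ : 0 < β) (hs : α + β < Real.pi) :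
    deriv (fun a => deriv (fun a' => Etri a' β) a) α
        = -Real.sin β / (Real.sin (α + β) * Real.sin α) ∧
    deriv (fun b => deriv (fun a => Etri a b) α) β
        = Real.cos (α + β) / Real.sin (α + β) ∧
    deriv (fun b => deriv (fun b' => Etri α b') b) β
        = -Real.sin α / (Real.sin (α + β) * Real.sin β) ∧
    ∀ v : Fin 2 → ℝ, v ≠ 0 →
      v ⬝ᵥ ((!![-Real.sin β / (Real.sin (α + β) * Real.sin α),
                 Real.cos (α + β) / Real.sin (α + β);
                 Real.cos (α + β) / Real.sin (α + β),
                 -Real.sin α / (Real.sin (α + β) * Real.sin β)]) *ᵥ v) < 0 := by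
  have hαπ : α < Real.pi := by linarith
  have hβπ : β < Real.pi := by linarith
  have hsα : 0 < Real.sin α := Real.sin_pos_of_pos_of_lt_pi hα hαπ
  have hsβ : 0 < Real.sin β := Real.sin_pos_of_pos_of_lt_pi hβ hβπ
  have hss : 0 < Real.sin (α + β) := Real.sin_pos_of_pos_of_lt_pi (by linarith) hs
  have e1 : Real.sin (Real.pi - α - β) = Real.sin (α + β) := by
    rw [show Real.pi - α - β = Real.pi - (α + β) by ring, Real.sin_pi_sub]
  have e2 : Real.cos (Real.pi - α - β) = -Real.cos (α + β) := by
    rw [show Real.pi - α - β = Real.pi - (α + β) by ring, Real.cos_pi_sub]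
  have hspt : 0 < Real.sin (Real.pi - α - β) := by rw [e1]; exact hss
  have hpy := Real.sin_sq_add_cos_sq (α + β)
  have hsinadd := Real.sin_add α β
  have hcosadd := Real.cos_add α β
  -- the outer log-derivative at the point π - α - β
  have houter : HasDerivAt (fun u => Real.log (2 * Real.sin u))
      (2 * Real.cos (Real.pi - α - β) / (2 * Real.sin (Real.pi - α - β))) (Real.pi - α - β) :=
    ((Real.hasDerivAt_sin _).const_mul 2).log (by positivity)
  have hlogα : HasDerivAt (fun a => Real.log (2 * Real.sin a))
      (2 * Real.cos α / (2 * Real.sin α)) α :=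
    ((Real.hasDerivAt_sin α).const_mul 2).log (by positivity)
  have hlogβ : HasDerivAt (fun bb => Real.log (2 * Real.sin bb))
      (2 * Real.cos β / (2 * Real.sin β)) β :=
    ((Real.hasDerivAt_sin β).const_mul 2).log (by positivity)
  refine ⟨?_, ?_, ?_, ?_⟩
  · -- ∂²/∂α²
    have hev : (fun a => deriv (fun a' => Etri a' β) a) =ᶠ[nhds α]
        (fun a => -Real.log (2 * Real.sin a) + Real.log (2 * Real.sin (Real.pi - a - β))) := by
      filter_upwards [Ioo_mem_nhds hα (by linarith : α < Real.pi - β)] with a ha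
      exact (Etri_partial1 hβ ha).deriv
    rw [hev.deriv_eq]
    have hin : HasDerivAt (fun a : ℝ => Real.pi - a - β) (-1) α := by
      simpa using ((hasDerivAt_id α).const_sub Real.pi).sub_const β
    have h3 : HasDerivAt (fun a => Real.log (2 * Real.sin (Real.pi - a - β)))
        (2 * Real.cos (Real.pi - α - β) / (2 * Real.sin (Real.pi - α - β)) * (-1)) α :=
      houter.comp (h := fun a : ℝ => Real.pi - a - β) α hin
    rw [(hlogα.fun_neg.fun_add h3).deriv]
    rw [e1, e2]
    have key : Real.cos (α+β) * Real.sin α - Real.cos α * Real.sin (α+β) = -Real.sin β := by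
      linear_combination Real.sin α * hcosadd - Real.cos α * hsinadd -
        Real.sin β * (Real.sin_sq_add_cos_sq α)
    field_simp
    linear_combination key
  · -- mixed partial
    have hev : (fun b => deriv (fun a => Etri a b) α) =ᶠ[nhds β]
        (fun b => -Real.log (2 * Real.sin α) + Real.log (2 * Real.sin (Real.pi - α - b))) := by
      filter_upwards [Ioo_mem_nhds hβ (by linarith : β < Real.pi - α)] with b hb
      exact (Etri_partial1 hb.1 ⟨hα, by have := hb.2; linarith⟩).deriv
    rw [hev.deriv_eq]
    have hin : HasDerivAt (fun b : ℝ => Real.pi - α - b) (-1) β := by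
      simpa using (hasDerivAt_id β).const_sub (Real.pi - α)
    have h3 : HasDerivAt (fun b => Real.log (2 * Real.sin (Real.pi - α - b)))
        (2 * Real.cos (Real.pi - α - β) / (2 * Real.sin (Real.pi - α - β)) * (-1)) β :=
      houter.comp (h := fun b : ℝ => Real.pi - α - b) β hin
    rw [((hasDerivAt_const β (-Real.log (2 * Real.sin α))).fun_add h3).deriv]
    rw [e1, e2]
    field_simp
    ring
  · -- ∂²/∂β²
    have hev : (fun b => deriv (fun b' => Etri α b') b) =ᶠ[nhds β]
        (fun b => -Real.log (2 * Real.sin b) + Real.log (2 * Real.sin (Real.pi - α - b))) := by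
      filter_upwards [Ioo_mem_nhds hβ (by linarith : β < Real.pi - α)] with b hb
      exact (Etri_partial2 hα hb).deriv
    rw [hev.deriv_eq]
    have hin : HasDerivAt (fun b : ℝ => Real.pi - α - b) (-1) β := by
      simpa using (hasDerivAt_id β).const_sub (Real.pi - α)
    have h3 : HasDerivAt (fun b => Real.log (2 * Real.sin (Real.pi - α - b)))
        (2 * Real.cos (Real.pi - α - β) / (2 * Real.sin (Real.pi - α - β)) * (-1)) β :=
      houter.comp (h := fun b : ℝ => Real.pi - α - b) β hin
    rw [(hlogβ.fun_neg.fun_add h3).deriv]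
    rw [e1, e2]
    have key : Real.cos (α+β) * Real.sin β - Real.cos β * Real.sin (α+β) = -Real.sin α := by
      linear_combination Real.sin β * hcosadd - Real.cos β * hsinadd -
        Real.sin α * (Real.sin_sq_add_cos_sq β)
    field_simp
    linear_combination key
  · -- negative definiteness
    intro v hv
    set x := v 0 with hx
    set y := v 1 with hy
    have hxy : x ≠ 0 ∨ y ≠ 0 := by
      by_contra h
      push_neg at h
      exact hv (funext fun i => by fin_cases i <;> simp [← hx, ← hy, h.1, h.2])
    set A := Real.sin α
    set B := Real.sin β
    set S := Real.sin (α + β)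
    set C := Real.cos (α + β)
    have hq : v ⬝ᵥ ((!![-B / (S * A), C / S; C / S, -A / (S * B)]) *ᵥ v)
        = x * (-B / (S * A) * x + C / S * y) + y * (C / S * x + -A / (S * B) * y) := by
      simp [Matrix.mulVec, dotProduct, Matrix.vecHead, Matrix.vecTail, Fin.sum_univ_two, Matrix.cons_val_zero,
        Matrix.cons_val_one, ← hx, ← hy]
      try ring
    rw [hq]
    have hpy' : S ^ 2 + C ^ 2 = 1 := Real.sin_sq_add_cos_sq (α + β)
    have hnum : 0 < (B * x - C * A * y) ^ 2 + S ^ 2 * A ^ 2 * y ^ 2 := by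
      rcases hxy with hx0 | hy0
      · rcases eq_or_ne y 0 with h0 | hy0
        · rw [h0]
          have hbx : B * x ≠ 0 := mul_ne_zero (ne_of_gt hsβ) hx0
          nlinarith [sq_pos_of_ne_zero hbx]
        · have : S ^ 2 * A ^ 2 * y ^ 2 > 0 := by positivity
          nlinarith [sq_nonneg (B * x - C * A * y)]
      · have : S ^ 2 * A ^ 2 * y ^ 2 > 0 := by positivity
        nlinarith [sq_nonneg (B * x - C * A * y)]
    have hkey : (S * A * B) * (x * (-B / (S * A) * x + C / S * y) + y * (C / S * x + -A / (S * B) * y))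
        = -((B * x - C * A * y) ^ 2 + S ^ 2 * A ^ 2 * y ^ 2) := by
      field_simp
      linear_combination (A ^ 2 * y ^ 2) * hpy'
    have hSAB : 0 < S * A * B := by positivity
    nlinarith [hkey, hnum, hSAB]
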